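/- For every fixed α ∈ (0,1], there exists a dimension d such that the Werner state ρ with parameter α = 1−2θ satisfies I(A:B)_ρ > 2·I(A:B)_{ρ^Γ}; indeed lim_{d→∞} I(A:B)_ρ = 1 − h((1−α)/2) > 0 while lim_{d→∞} I(A:B)_{ρ^Γ} = 0. -/

import Mathlib

open Matrix BigOperators Filter

noncomputable section

def swapM (d : ℕ) : Matrix (Fin d × Fin d) (Fin d × Fin d) ℂ :=
  fun p q => if p.1 = q.2 ∧ p.2 = q.1 then 1 else 0

def phiProj (d : ℕ) : Matrix (Fin d × Fin d) (Fin d × Fin d) ℂ :=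
  fun p q => if p.1 = p.2 ∧ q.1 = q.2 then (d : ℂ)⁻¹ else 0

def ptB {d : ℕ} (ρ : Matrix (Fin d × Fin d) (Fin d × Fin d) ℂ) :
    Matrix (Fin d × Fin d) (Fin d × Fin d) ℂ :=
  fun p q => ρ (p.1, q.2) (q.1, p.2)

def rhoS (d : ℕ) : Matrix (Fin d × Fin d) (Fin d × Fin d) ℂ :=
  ((d : ℂ)^2 + (d : ℂ))⁻¹ • (1 + swapM d)

def rhoA (d : ℕ) : Matrix (Fin d × Fin d) (Fin d × Fin d) ℂ :=
  ((d : ℂ)^2 - (d : ℂ))⁻¹ • (1 - swapM d)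

def wernerT (d : ℕ) (θ : ℝ) : Matrix (Fin d × Fin d) (Fin d × Fin d) ℂ :=
  ((1 - θ : ℝ) : ℂ) • rhoS d + ((θ : ℝ) : ℂ) • rhoA d

def wernerA (d : ℕ) (α : ℝ) : Matrix (Fin d × Fin d) (Fin d × Fin d) ℂ :=
  (((1 + α) / 2 : ℝ) : ℂ) • rhoS d + (((1 - α) / 2 : ℝ) : ℂ) • rhoA d

def trB {dA dB : ℕ} (ρ : Matrix (Fin dA × Fin dB) (Fin dA × Fin dB) ℂ) :
    Matrix (Fin dA) (Fin dA) ℂ :=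
  fun i k => ∑ j, ρ (i, j) (k, j)

def trA {dA dB : ℕ} (ρ : Matrix (Fin dA × Fin dB) (Fin dA × Fin dB) ℂ) :
    Matrix (Fin dB) (Fin dB) ℂ :=
  fun j l => ∑ i, ρ (i, j) (i, l)

def nlog2 (x : ℝ) : ℝ := -(x * Real.logb 2 x)

def binEnt (p : ℝ) : ℝ := nlog2 p + nlog2 (1 - p)

def vN {n : Type*} [Fintype n] [DecidableEq n] (ρ : Matrix n n ℂ) : ℝ :=
  if h : ρ.IsHermitian then ∑ i, nlog2 (h.eigenvalues i) else 0

def mutInfo {dA dB : ℕ} (ρ : Matrix (Fin dA × Fin dB) (Fin dA × Fin dB) ℂ) : ℝ :=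
  vN (trB ρ) + vN (trA ρ) - vN ρ

def traceNorm {n : Type*} [Fintype n] [DecidableEq n] (X : Matrix n n ℂ) : ℝ :=
  if h : X.IsHermitian then ∑ i, |h.eigenvalues i| else 0

def mlog {n : Type*} [Fintype n] [DecidableEq n] (A : Matrix n n ℂ) : Matrix n n ℂ :=
  if h : A.IsHermitian then
    (h.eigenvectorUnitary : Matrix n n ℂ) *
      Matrix.diagonal (fun i => ((Real.logb 2 (h.eigenvalues i) : ℝ) : ℂ)) *
      (star (h.eigenvectorUnitary : Matrix n n ℂ))
  else 0

def qRelEnt {n : Type*} [Fintype n] [DecidableEq n] (ρ σ : Matrix n n ℂ) : ℝ :=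
  ((ρ * mlog ρ - ρ * mlog σ).trace).re

def tpow {m : Type*} [Fintype m] (ρ : Matrix m m ℂ) (n : ℕ) :
    Matrix (Fin n → m) (Fin n → m) ℂ :=
  fun f g => ∏ i, ρ (f i) (g i)

def klDiv2 {ι : Type*} [Fintype ι] (p q : ι → ℝ) : ℝ :=
  ∑ i, p i * Real.logb 2 (p i / q i)

def phiVec (d : ℕ) : Fin d × Fin d → ℂ :=
  fun p => if p.1 = p.2 then (Complex.ofReal (Real.sqrt d))⁻¹ else 0

section Aux

variable {d : ℕ} {α : ℝ}


lemma swapM_herm (d : ℕ) : (swapM d).IsHermitian := by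
  unfold Matrix.IsHermitian
  ext p q
  rw [Matrix.conjTranspose_apply, swapM, swapM]
  by_cases h : p.1 = q.2 ∧ p.2 = q.1
  · rw [if_pos h, if_pos ⟨h.2.symm, h.1.symm⟩, star_one]
  · rw [if_neg h, if_neg (fun hh => h ⟨hh.2.symm, hh.1.symm⟩), star_zero]

lemma swapM_mul_self (d : ℕ) : swapM d * swapM d = 1 := by
  ext p q
  rw [Matrix.mul_apply, Finset.sum_eq_single (p.2, p.1)]
  · simp only [swapM, Matrix.one_apply]
    by_cases h : p = q
    · subst h
      simp
    · have h2 : ¬((p.2, p.1).1 = q.2 ∧ (p.2, p.1).2 = q.1) :=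
        fun hh => h (Prod.ext_iff.mpr ⟨hh.2, hh.1⟩)
      simp [h, h2]
  · intro r _ hr
    have hn : ¬ (p.1 = r.2 ∧ p.2 = r.1) := fun hh => hr (Prod.ext_iff.mpr ⟨hh.2.symm, hh.1.symm⟩)
    simp only [swapM]
    rw [if_neg hn, zero_mul]
  · intro h
    exact absurd (Finset.mem_univ _) h

lemma phiProj_herm (d : ℕ) : (phiProj d).IsHermitian := by
  unfold Matrix.IsHermitian
  ext p q
  rw [Matrix.conjTranspose_apply, phiProj, phiProj]
  by_cases h : p.1 = p.2 ∧ q.1 = q.2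
  · rw [if_pos h, if_pos ⟨h.2, h.1⟩, ← Complex.ofReal_natCast, ← Complex.ofReal_inv,
      Complex.star_def, Complex.conj_ofReal]
  · rw [if_neg h, if_neg (fun hh => h ⟨hh.2, hh.1⟩), star_zero]

lemma phiProj_mul_self (d : ℕ) (hd : 0 < d) : phiProj d * phiProj d = phiProj d := by
  ext p q
  rw [Matrix.mul_apply]
  simp only [phiProj]
  by_cases h : p.1 = p.2 ∧ q.1 = q.2
  · rw [if_pos h]
    have : ∀ r : Fin d × Fin d,
        (if p.1 = p.2 ∧ r.1 = r.2 then (d:ℂ)⁻¹ else 0) * (if r.1 = r.2 ∧ q.1 = q.2 then (d:ℂ)⁻¹ else 0)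
        = if r.1 = r.2 then (d:ℂ)⁻¹ * (d:ℂ)⁻¹ else 0 := by
      intro r
      by_cases hr : r.1 = r.2
      · rw [if_pos ⟨h.1, hr⟩, if_pos ⟨hr, h.2⟩, if_pos hr]
      · rw [if_neg (fun hh => hr hh.2), zero_mul, if_neg hr]
    rw [Finset.sum_congr rfl (fun r _ => this r), Fintype.sum_prod_type]
    have hrow : ∀ r1 : Fin d, (∑ r2 : Fin d, if r1 = r2 then (d:ℂ)⁻¹ * (d:ℂ)⁻¹ else 0)
        = (d:ℂ)⁻¹ * (d:ℂ)⁻¹ := fun r1 => by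
      rw [Finset.sum_ite_eq]; exact if_pos (Finset.mem_univ r1)
    rw [Finset.sum_congr rfl (fun r1 _ => hrow r1), Finset.sum_const, Finset.card_univ,
      Fintype.card_fin, nsmul_eq_mul]
    have hd' : (d : ℂ) ≠ 0 := Nat.cast_ne_zero.mpr hd.ne'
    field_simp
  · rw [if_neg h]
    apply Finset.sum_eq_zero
    intro r _
    by_cases h1 : p.1 = p.2 ∧ r.1 = r.2
    · rw [if_neg (fun hh : r.1 = r.2 ∧ q.1 = q.2 => h ⟨h1.1, hh.2⟩), mul_zero]
    · rw [if_neg h1, zero_mul]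



-- trace = sum of eigenvalues
lemma trace_eq_sum_eig {N : Type*} [Fintype N] [DecidableEq N] {A : Matrix N N ℂ}
    (hA : A.IsHermitian) : A.trace = ∑ i, ((hA.eigenvalues i : ℝ) : ℂ) := by
  exact hA.trace_eq_sum_eigenvalues

lemma eig_dichotomy {N : Type*} [Fintype N] [DecidableEq N] {A : Matrix N N ℂ}
    (hA : A.IsHermitian) {a b : ℝ}
    (hq : (A - (a : ℂ) • 1) * (A - (b : ℂ) • 1) = 0) (i : N) :
    hA.eigenvalues i = a ∨ hA.eigenvalues i = b := by
  set v : N → ℂ := ⇑(hA.eigenvectorBasis i) with hv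
  have hv0 : v ≠ 0 := by
    intro h
    apply hA.eigenvectorBasis.orthonormal.ne_zero i
    ext j
    exact congrFun h j
  have hAv : A *ᵥ v = ((hA.eigenvalues i : ℂ)) • v := by
    rw [hv, hA.mulVec_eigenvectorBasis]
    ext j
    simp [Complex.real_smul]
  have hb : (A - (b : ℂ) • 1) *ᵥ v = ((hA.eigenvalues i : ℂ) - b) • v := by
    rw [Matrix.sub_mulVec, hAv, Matrix.smul_mulVec, Matrix.one_mulVec, sub_smul]
  have ha : (A - (a : ℂ) • 1) *ᵥ (((hA.eigenvalues i : ℂ) - b) • v)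
      = (((hA.eigenvalues i : ℂ) - a) * ((hA.eigenvalues i : ℂ) - b)) • v := by
    rw [Matrix.mulVec_smul, Matrix.sub_mulVec, hAv, Matrix.smul_mulVec,
      Matrix.one_mulVec, ← sub_smul, smul_smul, mul_comm]
  have h0 : (((hA.eigenvalues i : ℂ) - a) * ((hA.eigenvalues i : ℂ) - b)) • v = 0 := by
    rw [← ha, ← hb, Matrix.mulVec_mulVec, hq, Matrix.zero_mulVec]
  rcases smul_eq_zero.mp h0 with h | h
  · rcases mul_eq_zero.mp h with h | h
    · left
      have := sub_eq_zero.mp h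
      exact_mod_cast this
    · right
      have := sub_eq_zero.mp h
      exact_mod_cast this
  · exact absurd h hv0







lemma vN_two_valued {N : Type*} [Fintype N] [DecidableEq N] {A : Matrix N N ℂ}
    (hA : A.IsHermitian) {a b : ℝ} (hab : a ≠ b)
    (hq : (A - (a : ℂ) • 1) * (A - (b : ℂ) • 1) = 0)
    (m : ℕ)
    (htr : A.trace = (((m : ℝ) * a + ((Fintype.card N : ℝ) - m) * b : ℝ) : ℂ)) :
    vN A = (m : ℝ) * nlog2 a + ((Fintype.card N : ℝ) - m) * nlog2 b := by
  classical
  rw [vN, dif_pos hA]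
  set S : Finset N := Finset.univ.filter (fun i => hA.eigenvalues i = a) with hS
  have hdich := eig_dichotomy hA hq
  -- sum of any f over eigenvalues
  have key : ∀ f : ℝ → ℝ, ∑ i, f (hA.eigenvalues i)
      = (S.card : ℝ) * f a + ((Fintype.card N : ℝ) - S.card) * f b := by
    intro f
    rw [← Finset.sum_filter_add_sum_filter_not Finset.univ
      (fun i => hA.eigenvalues i = a) (fun i => f (hA.eigenvalues i))]
    have h1 : ∑ i ∈ Finset.univ.filter (fun i => hA.eigenvalues i = a),
        f (hA.eigenvalues i) = (S.card : ℝ) * f a := by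
      rw [Finset.sum_congr rfl (fun i hi => by
        rw [(Finset.mem_filter.mp hi).2]), Finset.sum_const, nsmul_eq_mul]
    have h2 : ∑ i ∈ Finset.univ.filter (fun i => ¬ hA.eigenvalues i = a),
        f (hA.eigenvalues i) = ((Fintype.card N : ℝ) - S.card) * f b := by
      rw [Finset.sum_congr rfl (fun i hi => by
        rcases hdich i with h | h
        · exact absurd h (Finset.mem_filter.mp hi).2
        · rw [h]), Finset.sum_const, nsmul_eq_mul]
      congr 1
      have hsplit := Finset.card_filter_add_card_filter_not (s := Finset.univ)
        (p := fun i => hA.eigenvalues i = a)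
      rw [Finset.card_univ, ← hS] at hsplit
      have : (Finset.univ.filter (fun i => ¬ hA.eigenvalues i = a)).card
          = Fintype.card N - S.card := by omega
      rw [this]
      have hle : S.card ≤ Fintype.card N := by
        rw [← Finset.card_univ]; exact Finset.card_le_card (Finset.filter_subset _ _)
      push_cast [Nat.cast_sub hle]
      ring
    rw [h1, h2]
  -- identify S.card with m
  have htr2 : (∑ i, hA.eigenvalues i : ℝ)
      = (m : ℝ) * a + ((Fintype.card N : ℝ) - m) * b := by
    have hc : ((∑ i, hA.eigenvalues i : ℝ) : ℂ)
        = (((m : ℝ) * a + ((Fintype.card N : ℝ) - m) * b : ℝ) : ℂ) := by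
      rw [← htr, trace_eq_sum_eig hA]
      push_cast
      ring
    exact_mod_cast hc
  have hid := key id
  simp only [id] at hid
  rw [hid] at htr2
  have hcard : (S.card : ℝ) = m := by
    have h := htr2
    have : ((S.card : ℝ) - m) * (a - b) = 0 := by ring_nf; nlinarith [h]
    rcases mul_eq_zero.mp this with h | h
    · linarith [sub_eq_zero.mp h]
    · exact absurd (sub_eq_zero.mp h) hab
  rw [key nlog2, hcard]

lemma eig_const {N : Type*} [Fintype N] [DecidableEq N] (r : ℝ)
    (h : ((r : ℂ) • 1 : Matrix N N ℂ).IsHermitian) (i : N) : h.eigenvalues i = r := by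
  set v : N → ℂ := ⇑(h.eigenvectorBasis i) with hv
  have hv0 : v ≠ 0 := by
    intro hh
    apply h.eigenvectorBasis.orthonormal.ne_zero i
    ext j; exact congrFun hh j
  have hAv : ((r : ℂ) • 1 : Matrix N N ℂ) *ᵥ v = ((h.eigenvalues i : ℂ)) • v := by
    rw [hv, h.mulVec_eigenvectorBasis]
    ext j; simp [Complex.real_smul]
  rw [Matrix.smul_mulVec, Matrix.one_mulVec] at hAv
  have : ((r : ℂ) - (h.eigenvalues i : ℂ)) • v = 0 := by rw [sub_smul, hAv, sub_self]
  rcases smul_eq_zero.mp this with hh | hh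
  · have := sub_eq_zero.mp hh
    exact_mod_cast this.symm
  · exact absurd hh hv0

lemma vN_scalar {N : Type*} [Fintype N] [DecidableEq N] (r : ℝ) :
    vN ((r : ℂ) • 1 : Matrix N N ℂ) = (Fintype.card N : ℝ) * nlog2 r := by
  have h : ((r : ℂ) • 1 : Matrix N N ℂ).IsHermitian := by
    unfold Matrix.IsHermitian
    rw [Matrix.conjTranspose_smul, Matrix.conjTranspose_one]
    simp [Complex.star_def, Complex.conj_ofReal]
  rw [vN, dif_pos h]
  rw [Finset.sum_congr rfl (fun i _ => by rw [eig_const r h i]), Finset.sum_const,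
    nsmul_eq_mul, Finset.card_univ]



-- structured form of the Werner state
lemma wernerA_eq (hd : 2 ≤ d) (α : ℝ) :
    wernerA d α = ((((1+α)/((d:ℝ)^2+d) + (1-α)/((d:ℝ)^2-d))/2 : ℝ) : ℂ) • 1
      + ((((1+α)/((d:ℝ)^2+d) - (1-α)/((d:ℝ)^2-d))/2 : ℝ) : ℂ) • swapM d := by
  have hd0 : (0:ℝ) < d := by positivity
  have h1 : ((d:ℝ)^2+d) ≠ 0 := by positivity
  have h2 : ((d:ℝ)^2-d) ≠ 0 := by
    have : (2:ℝ) ≤ d := by exact_mod_cast hd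
    nlinarith
  have hz1 : ((d:ℂ)^2 + (d:ℂ)) ≠ 0 := by
    have e : ((d:ℂ)^2 + (d:ℂ)) = (((d:ℝ)^2 + (d:ℝ) : ℝ) : ℂ) := by push_cast; ring
    rw [e]
    exact Complex.ofReal_ne_zero.mpr h1
  have hz2 : ((d:ℂ)^2 - (d:ℂ)) ≠ 0 := by
    have e : ((d:ℂ)^2 - (d:ℂ)) = (((d:ℝ)^2 - (d:ℝ) : ℝ) : ℂ) := by push_cast; ring
    rw [e]
    exact Complex.ofReal_ne_zero.mpr h2
  ext p q
  simp only [wernerA, rhoS, rhoA, Matrix.add_apply, Matrix.smul_apply, Matrix.sub_apply,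
    Matrix.one_apply, swapM, smul_eq_mul]
  by_cases hpq : p = q
  · subst hpq
    by_cases hsw : p.1 = p.2
    · simp only [hsw, eq_self_iff_true, and_self, ite_true]
      push_cast
      field_simp
      ring
    · have hn : ¬(p.1 = p.2 ∧ p.2 = p.1) := fun hh => hsw hh.1
      simp only [eq_self_iff_true, ite_true, if_neg hn]
      push_cast
      field_simp
      ring
  · by_cases hsw : p.1 = q.2 ∧ p.2 = q.1
    · simp only [if_neg hpq, if_pos hsw]
      push_cast
      field_simp
      ring
    · simp only [if_neg hpq, if_neg hsw]
      simp


lemma herm_comb {N : Type*} [Fintype N] [DecidableEq N] (r s : ℝ) {M : Matrix N N ℂ}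
    (hM : M.IsHermitian) : (((r:ℂ) • 1 + (s:ℂ) • M)).IsHermitian := by
  unfold Matrix.IsHermitian at *
  rw [Matrix.conjTranspose_add, Matrix.conjTranspose_smul, Matrix.conjTranspose_smul,
    Matrix.conjTranspose_one, hM]
  simp [Complex.conj_ofReal]

lemma quad_invol {N : Type*} [Fintype N] [DecidableEq N] {M : Matrix N N ℂ}
    (hM : M * M = 1) (r s : ℂ) :
    ((r•1 + s•M) - (r+s)•(1 : Matrix N N ℂ)) * ((r•1 + s•M) - (r-s)•1) = 0 := by
  have e1 : (r•1 + s•M) - (r+s)•(1 : Matrix N N ℂ) = s•(M - 1) := by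
    rw [smul_sub, add_smul]; abel
  have e2 : (r•1 + s•M) - (r-s)•(1 : Matrix N N ℂ) = s•(M + 1) := by
    rw [smul_add, sub_smul]; abel
  rw [e1, e2, Matrix.smul_mul, Matrix.mul_smul, smul_smul]
  have : (M - 1) * (M + 1) = 0 := by
    rw [Matrix.sub_mul, Matrix.mul_add, Matrix.mul_add, hM, Matrix.mul_one, Matrix.one_mul,
      Matrix.one_mul]
    abel
  rw [this, smul_zero]

lemma quad_proj {N : Type*} [Fintype N] [DecidableEq N] {P : Matrix N N ℂ}
    (hP : P * P = P) (r s : ℂ) :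
    ((r•1 + s•P) - (r+s)•(1 : Matrix N N ℂ)) * ((r•1 + s•P) - r•1) = 0 := by
  have e1 : (r•1 + s•P) - (r+s)•(1 : Matrix N N ℂ) = s•(P - 1) := by
    rw [smul_sub, add_smul]; abel
  have e2 : (r•1 + s•P) - r•(1 : Matrix N N ℂ) = s•P := by abel
  rw [e1, e2, Matrix.smul_mul, Matrix.mul_smul, smul_smul]
  have : (P - 1) * P = 0 := by
    rw [Matrix.sub_mul, hP, Matrix.one_mul, sub_self]
  rw [this, smul_zero]

lemma trace_swapM (d : ℕ) : (swapM d).trace = (d : ℂ) := by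
  rw [Matrix.trace]
  simp only [Matrix.diag, swapM]
  rw [Fintype.sum_prod_type]
  have : ∀ i : Fin d, (∑ j : Fin d, if i = j ∧ j = i then (1:ℂ) else 0) = 1 := by
    intro i
    rw [Finset.sum_eq_single i]
    · simp
    · intro b _ hb
      rw [if_neg (fun hh => hb hh.2)]
    · intro h; exact absurd (Finset.mem_univ _) h
  rw [Finset.sum_congr rfl (fun i _ => this i), Finset.sum_const, Finset.card_univ,
    Fintype.card_fin, nsmul_eq_mul, mul_one]

lemma trace_phiProj (d : ℕ) (hd : 0 < d) : (phiProj d).trace = 1 := by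
  rw [Matrix.trace]
  simp only [Matrix.diag, phiProj]
  rw [Fintype.sum_prod_type]
  have : ∀ i : Fin d, (∑ j : Fin d, if i = j ∧ i = j then ((d:ℂ))⁻¹ else 0) = (d:ℂ)⁻¹ := by
    intro i
    rw [Finset.sum_eq_single i]
    · simp
    · intro b _ hb
      rw [if_neg (fun hh => hb hh.1.symm)]
    · intro h; exact absurd (Finset.mem_univ _) h
  rw [Finset.sum_congr rfl (fun i _ => this i), Finset.sum_const, Finset.card_univ,
    Fintype.card_fin, nsmul_eq_mul]
  exact mul_inv_cancel₀ (Nat.cast_ne_zero.mpr hd.ne')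

lemma trace_comb_swap (r s : ℝ) :
    ((r:ℂ) • 1 + (s:ℂ) • swapM d).trace = (((r*(d*d) + s*d : ℝ)) : ℂ) := by
  rw [Matrix.trace_add, Matrix.trace_smul, Matrix.trace_smul, Matrix.trace_one, trace_swapM]
  simp only [Fintype.card_prod, Fintype.card_fin, smul_eq_mul]
  push_cast
  ring

lemma trace_comb_phi (hd : 0 < d) (r s : ℝ) :
    ((r:ℂ) • 1 + (s:ℂ) • phiProj d).trace = (((r*(d*d) + s : ℝ)) : ℂ) := by
  rw [Matrix.trace_add, Matrix.trace_smul, Matrix.trace_smul, Matrix.trace_one,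
    trace_phiProj d hd]
  simp only [Fintype.card_prod, Fintype.card_fin, smul_eq_mul]
  push_cast
  ring

lemma ptB_comb (hd : 0 < d) (r s : ℝ) :
    ptB ((r:ℂ) • 1 + (s:ℂ) • swapM d) = (r:ℂ) • 1 + (((s*d : ℝ)):ℂ) • phiProj d := by
  have hdc : (d:ℂ) ≠ 0 := Nat.cast_ne_zero.mpr hd.ne'
  ext p q
  simp only [ptB, Matrix.add_apply, Matrix.smul_apply, Matrix.one_apply, swapM, phiProj,
    smul_eq_mul]
  have e1 : ((p.1, q.2) = (q.1, p.2)) ↔ (p = q) := by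
    rw [Prod.ext_iff, Prod.ext_iff]
    constructor
    · rintro ⟨h1, h2⟩; exact ⟨h1, h2.symm⟩
    · rintro ⟨h1, h2⟩; exact ⟨h1, h2.symm⟩
  have e2 : ((p.1, q.2).1 = (q.1, p.2).2 ∧ (p.1, q.2).2 = (q.1, p.2).1)
      ↔ (p.1 = p.2 ∧ q.1 = q.2) := by
    constructor
    · rintro ⟨h1, h2⟩; exact ⟨h1, h2.symm⟩
    · rintro ⟨h1, h2⟩; exact ⟨h1, h2.symm⟩
  by_cases h1 : p = q
  · by_cases h2 : p.1 = p.2 ∧ q.1 = q.2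
    · rw [if_pos (e1.mpr h1), if_pos (e2.mpr h2), if_pos h1, if_pos h2]
      push_cast
      field_simp
    · rw [if_pos (e1.mpr h1), if_neg (fun hh => h2 (e2.mp hh)), if_pos h1, if_neg h2]
      simp
  · by_cases h2 : p.1 = p.2 ∧ q.1 = q.2
    · rw [if_neg (fun hh => h1 (e1.mp hh)), if_pos (e2.mpr h2), if_neg h1, if_pos h2]
      push_cast
      field_simp
    · rw [if_neg (fun hh => h1 (e1.mp hh)), if_neg (fun hh => h2 (e2.mp hh)), if_neg h1,
        if_neg h2]
      simp

lemma trB_comb_swap (r s : ℝ) :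
    trB ((r:ℂ) • 1 + (s:ℂ) • swapM d) = (((r*d + s : ℝ)):ℂ) • 1 := by
  ext i k
  simp only [trB, Matrix.add_apply, Matrix.smul_apply, Matrix.one_apply, swapM, smul_eq_mul]
  by_cases h : i = k
  · subst h
    have : ∀ j : Fin d, ((r:ℂ) * (if ((i,j) : Fin d × Fin d) = (i,j) then 1 else 0)
        + (s:ℂ) * (if i = j ∧ j = i then 1 else 0))
        = (r:ℂ) + (s:ℂ) * (if i = j then 1 else 0) := by
      intro j
      rw [if_pos rfl, mul_one]
      congr 1
      by_cases hj : i = j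
      · rw [if_pos ⟨hj, hj.symm⟩, if_pos hj]
      · rw [if_neg (fun hh => hj hh.1), if_neg hj]
    rw [Finset.sum_congr rfl (fun j _ => this j), Finset.sum_add_distrib, Finset.sum_const,
      Finset.card_univ, Fintype.card_fin, nsmul_eq_mul, if_pos rfl, ← Finset.mul_sum]
    rw [Finset.sum_ite_eq Finset.univ i (fun _ => (1:ℂ)), if_pos (Finset.mem_univ _)]
    push_cast
    ring
  · have : ∀ j : Fin d, ((r:ℂ) * (if ((i,j) : Fin d × Fin d) = (k,j) then 1 else 0)
        + (s:ℂ) * (if i = j ∧ j = k then 1 else 0)) = 0 := by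
      intro j
      rw [if_neg (fun hh => h (congrArg Prod.fst hh)),
        if_neg (fun hh => h (hh.1.trans hh.2)), mul_zero, mul_zero, add_zero]
    rw [Finset.sum_congr rfl (fun j _ => this j), Finset.sum_const, smul_zero, if_neg h, mul_zero]

lemma trA_comb_swap (r s : ℝ) :
    trA ((r:ℂ) • 1 + (s:ℂ) • swapM d) = (((r*d + s : ℝ)):ℂ) • 1 := by
  ext i k
  simp only [trA, Matrix.add_apply, Matrix.smul_apply, Matrix.one_apply, swapM, smul_eq_mul]
  by_cases h : i = k
  · subst h
    have : ∀ j : Fin d, ((r:ℂ) * (if ((j,i) : Fin d × Fin d) = (j,i) then 1 else 0)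
        + (s:ℂ) * (if j = i ∧ i = j then 1 else 0))
        = (r:ℂ) + (s:ℂ) * (if j = i then 1 else 0) := by
      intro j
      rw [if_pos rfl, mul_one]
      congr 1
      by_cases hj : j = i
      · rw [if_pos ⟨hj, hj.symm⟩, if_pos hj]
      · rw [if_neg (fun hh => hj hh.1), if_neg hj]
    rw [Finset.sum_congr rfl (fun j _ => this j), Finset.sum_add_distrib, Finset.sum_const,
      Finset.card_univ, Fintype.card_fin, nsmul_eq_mul, if_pos rfl, ← Finset.mul_sum]
    rw [Finset.sum_ite_eq' Finset.univ i (fun _ => (1:ℂ)), if_pos (Finset.mem_univ _)]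
    push_cast
    ring
  · have : ∀ j : Fin d, ((r:ℂ) * (if ((j,i) : Fin d × Fin d) = (j,k) then 1 else 0)
        + (s:ℂ) * (if j = k ∧ i = j then 1 else 0)) = 0 := by
      intro j
      rw [if_neg (fun hh => h (congrArg Prod.snd hh)),
        if_neg (fun hh => h (hh.2.trans hh.1)), mul_zero, mul_zero, add_zero]
    rw [Finset.sum_congr rfl (fun j _ => this j), Finset.sum_const, smul_zero, if_neg h, mul_zero]

lemma trB_comb_phi (hd : 0 < d) (r s : ℝ) :
    trB ((r:ℂ) • 1 + (s:ℂ) • phiProj d) = (((r*d + s*(d:ℝ)⁻¹ : ℝ)):ℂ) • 1 := by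
  have hdc : (d:ℂ) ≠ 0 := Nat.cast_ne_zero.mpr hd.ne'
  ext i k
  simp only [trB, Matrix.add_apply, Matrix.smul_apply, Matrix.one_apply, phiProj, smul_eq_mul]
  by_cases h : i = k
  · subst h
    have : ∀ j : Fin d, ((r:ℂ) * (if ((i,j) : Fin d × Fin d) = (i,j) then 1 else 0)
        + (s:ℂ) * (if i = j ∧ i = j then ((d:ℂ))⁻¹ else 0))
        = (r:ℂ) + (s:ℂ) * (if i = j then ((d:ℂ))⁻¹ else 0) := by
      intro j
      rw [if_pos rfl, mul_one]
      congr 1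
      by_cases hj : i = j
      · rw [if_pos ⟨hj, hj⟩, if_pos hj]
      · rw [if_neg (fun hh => hj hh.1), if_neg hj]
    rw [Finset.sum_congr rfl (fun j _ => this j), Finset.sum_add_distrib, Finset.sum_const,
      Finset.card_univ, Fintype.card_fin, nsmul_eq_mul, if_pos rfl, ← Finset.mul_sum]
    rw [Finset.sum_ite_eq Finset.univ i (fun _ => ((d:ℂ))⁻¹), if_pos (Finset.mem_univ _)]
    push_cast
    ring
  · have : ∀ j : Fin d, ((r:ℂ) * (if ((i,j) : Fin d × Fin d) = (k,j) then 1 else 0)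
        + (s:ℂ) * (if i = j ∧ k = j then ((d:ℂ))⁻¹ else 0)) = 0 := by
      intro j
      rw [if_neg (fun hh => h (congrArg Prod.fst hh)),
        if_neg (fun hh => h (hh.1.trans hh.2.symm)), mul_zero, mul_zero, add_zero]
    rw [Finset.sum_congr rfl (fun j _ => this j), Finset.sum_const, smul_zero, if_neg h, mul_zero]

lemma trA_comb_phi (hd : 0 < d) (r s : ℝ) :
    trA ((r:ℂ) • 1 + (s:ℂ) • phiProj d) = (((r*d + s*(d:ℝ)⁻¹ : ℝ)):ℂ) • 1 := by
  have hdc : (d:ℂ) ≠ 0 := Nat.cast_ne_zero.mpr hd.ne'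
  ext i k
  simp only [trA, Matrix.add_apply, Matrix.smul_apply, Matrix.one_apply, phiProj, smul_eq_mul]
  by_cases h : i = k
  · subst h
    have : ∀ j : Fin d, ((r:ℂ) * (if ((j,i) : Fin d × Fin d) = (j,i) then 1 else 0)
        + (s:ℂ) * (if j = i ∧ j = i then ((d:ℂ))⁻¹ else 0))
        = (r:ℂ) + (s:ℂ) * (if j = i then ((d:ℂ))⁻¹ else 0) := by
      intro j
      rw [if_pos rfl, mul_one]
      congr 1
      by_cases hj : j = i
      · rw [if_pos ⟨hj, hj⟩, if_pos hj]
      · rw [if_neg (fun hh => hj hh.1), if_neg hj]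
    rw [Finset.sum_congr rfl (fun j _ => this j), Finset.sum_add_distrib, Finset.sum_const,
      Finset.card_univ, Fintype.card_fin, nsmul_eq_mul, if_pos rfl, ← Finset.mul_sum]
    rw [Finset.sum_ite_eq' Finset.univ i (fun _ => ((d:ℂ))⁻¹), if_pos (Finset.mem_univ _)]
    push_cast
    ring
  · have : ∀ j : Fin d, ((r:ℂ) * (if ((j,i) : Fin d × Fin d) = (j,k) then 1 else 0)
        + (s:ℂ) * (if j = i ∧ j = k then ((d:ℂ))⁻¹ else 0)) = 0 := by
      intro j
      rw [if_neg (fun hh => h (congrArg Prod.snd hh)),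
        if_neg (fun hh => h (hh.1.symm.trans hh.2)), mul_zero, mul_zero, add_zero]
    rw [Finset.sum_congr rfl (fun j _ => this j), Finset.sum_const, smul_zero, if_neg h, mul_zero]





variable {α : ℝ}

-- R1
lemma R1 (hα0 : 0 < α) (hα1 : α ≤ 1) {x : ℝ} (hx : 2 ≤ x) :
    (x*(x+1)/2) * nlog2 ((1+α)/(x^2+x))
      = ((1+α)/2)*(2*Real.logb 2 x + Real.logb 2 (1+1/x) - Real.logb 2 (1+α)) := by
  have hx0 : 0 < x := by linarith
  have h1 : (0:ℝ) < 1 + α := by linarith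
  have h2 : (0:ℝ) < x^2 + x := by nlinarith
  have h3 : (0:ℝ) < 1 + 1/x := by positivity
  have hsplit : Real.logb 2 ((1+α)/(x^2+x))
      = Real.logb 2 (1+α) - (2*Real.logb 2 x + Real.logb 2 (1+1/x)) := by
    rw [Real.logb_div h1.ne' h2.ne']
    have : x^2 + x = x*x*(1+1/x) := by field_simp
    rw [this, Real.logb_mul (by positivity) h3.ne', Real.logb_mul hx0.ne' hx0.ne']
    ring
  rw [nlog2, hsplit]
  have hcoef : (x*(x+1)/2) * ((1+α)/(x^2+x)) = (1+α)/2 := by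
    field_simp
  linear_combination (2*Real.logb 2 x + Real.logb 2 (1+1/x) - Real.logb 2 (1+α)) * hcoef


variable {α : ℝ}

lemma R2 (hα0 : 0 < α) (hα1 : α ≤ 1) {x : ℝ} (hx : 2 ≤ x) :
    (x*(x-1)/2) * nlog2 ((1-α)/(x^2-x))
      = ((1-α)/2)*(2*Real.logb 2 x + Real.logb 2 (1-1/x) - Real.logb 2 (1-α)) := by
  have hx0 : 0 < x := by linarith
  rcases eq_or_lt_of_le hα1 with h | h
  · subst h
    simp [nlog2]
  have h1 : (0:ℝ) < 1 - α := by linarith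
  have h2 : (0:ℝ) < x^2 - x := by nlinarith
  have h3 : (0:ℝ) < 1 - 1/x := by
    have : 1/x ≤ 1/2 := by
      rw [div_le_div_iff₀ hx0 (by norm_num)]; linarith
    linarith
  have hsplit : Real.logb 2 ((1-α)/(x^2-x))
      = Real.logb 2 (1-α) - (2*Real.logb 2 x + Real.logb 2 (1-1/x)) := by
    rw [Real.logb_div h1.ne' h2.ne']
    have : x^2 - x = x*x*(1-1/x) := by field_simp
    rw [this, Real.logb_mul (by positivity) h3.ne', Real.logb_mul hx0.ne' hx0.ne']
    ring
  rw [nlog2, hsplit]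
  have hcoef : (x*(x-1)/2) * ((1-α)/(x^2-x)) = (1-α)/2 := by
    have hx1 : x - 1 ≠ 0 := (by linarith : (0:ℝ) < x - 1).ne'
    field_simp
  linear_combination (2*Real.logb 2 x + Real.logb 2 (1-1/x) - Real.logb 2 (1-α)) * hcoef

lemma R3 (hα0 : 0 < α) {x : ℝ} (hx : 2 ≤ x) :
    nlog2 (α/x) = (α/x)*Real.logb 2 x - (α/x)*Real.logb 2 α := by
  have hx0 : 0 < x := by linarith
  rw [nlog2, Real.logb_div hα0.ne' hx0.ne']
  ring

lemma R4 (hα0 : 0 < α) (hα1 : α ≤ 1) {x : ℝ} (hx : 2 ≤ x) :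
    (x^2-1) * nlog2 ((x-α)/(x*(x^2-1)))
      = -(1-α/x)*(Real.logb 2 (1-α/x) - 2*Real.logb 2 x - Real.logb 2 (1-1/x^2)) := by
  have hx0 : 0 < x := by linarith
  have h1 : (0:ℝ) < x - α := by linarith
  have h2 : (0:ℝ) < x^2 - 1 := by nlinarith
  have h3 : (0:ℝ) < 1 - α/x := by
    rw [sub_pos, div_lt_one hx0]; linarith
  have h4 : (0:ℝ) < 1 - 1/x^2 := by
    rw [sub_pos, div_lt_one (by positivity)]; nlinarith
  have hsplit : Real.logb 2 ((x-α)/(x*(x^2-1)))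
      = Real.logb 2 (1-α/x) - 2*Real.logb 2 x - Real.logb 2 (1-1/x^2) := by
    rw [Real.logb_div h1.ne' (by positivity)]
    have e1 : x - α = x * (1-α/x) := by field_simp
    have e2 : x*(x^2-1) = (x*x*x)*(1-1/x^2) := by field_simp
    rw [e1, e2, Real.logb_mul hx0.ne' h3.ne', Real.logb_mul (by positivity) h4.ne',
      Real.logb_mul (by positivity) hx0.ne', Real.logb_mul hx0.ne' hx0.ne']
    ring
  rw [nlog2, hsplit]
  have hcoef : (x^2-1) * ((x-α)/(x*(x^2-1))) = 1 - α/x := by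
    field_simp
  linear_combination (-(Real.logb 2 (1-α/x) - 2*Real.logb 2 x - Real.logb 2 (1-1/x^2))) * hcoef

lemma const_ident (hα0 : 0 < α) (hα1 : α ≤ 1) :
    ((1+α)/2)*Real.logb 2 (1+α) + ((1-α)/2)*Real.logb 2 (1-α)
      = 1 - binEnt ((1-α)/2) := by
  have h1 : (0:ℝ) < 1 + α := by linarith
  have e1 : nlog2 ((1+α)/2) = -(((1+α)/2) * (Real.logb 2 (1+α) - 1)) := by
    rw [nlog2, Real.logb_div h1.ne' (by norm_num), Real.logb_self_eq_one (by norm_num)]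
  have e2 : nlog2 ((1-α)/2) = -(((1-α)/2) * (Real.logb 2 (1-α) - 1)) := by
    rcases eq_or_lt_of_le hα1 with h | h
    · subst h; simp [nlog2]
    have h2 : (0:ℝ) < 1 - α := by linarith
    rw [nlog2, Real.logb_div h2.ne' (by norm_num), Real.logb_self_eq_one (by norm_num)]
  rw [binEnt, show (1:ℝ) - (1-α)/2 = (1+α)/2 by ring, e1, e2]
  ring

lemma binEnt_lt_one (hα0 : 0 < α) (hα1 : α ≤ 1) : binEnt ((1-α)/2) < 1 := by
  have hb : binEnt ((1-α)/2) = Real.binEntropy ((1-α)/2) / Real.log 2 := by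
    rw [binEnt, nlog2, nlog2, Real.binEntropy_eq_negMulLog_add_negMulLog_one_sub, Real.negMulLog, Real.negMulLog,
      Real.logb, Real.logb]
    field_simp
  rw [hb, div_lt_one (Real.log_pos (by norm_num))]
  apply Real.binEntropy_lt_log_two.mpr
  intro h
  have : α = 0 := by
    have := h
    norm_num at this
    linarith
  linarith



def Wfun (α : ℝ) (d : ℕ) : ℝ :=
  ((1+α)/2)*(Real.logb 2 (1+α) - Real.logb 2 (1+1/(d:ℝ)))
  + ((1-α)/2)*(Real.logb 2 (1-α) - Real.logb 2 (1-1/(d:ℝ)))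

def Gfun (α : ℝ) (d : ℕ) : ℝ :=
  (α/(d:ℝ))*Real.logb 2 (d:ℝ) + (α/(d:ℝ))*Real.logb 2 α
  + (1-α/(d:ℝ))*(Real.logb 2 (1-α/(d:ℝ)) - Real.logb 2 (1-1/(d:ℝ)^2))

lemma logb_tendsto_zero {f : ℕ → ℝ} (hf : Tendsto f atTop (nhds 1)) :
    Tendsto (fun d => Real.logb 2 (f d)) atTop (nhds 0) := by
  have hc : ContinuousAt (Real.logb 2) 1 := by
    apply ContinuousAt.div_const
    exact Real.continuousAt_log one_ne_zero
  have := hc.tendsto.comp hf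
  rwa [Real.logb_one] at this

lemma inv_nat_tendsto : Tendsto (fun d : ℕ => 1/(d:ℝ)) atTop (nhds 0) :=
  tendsto_one_div_atTop_nhds_zero_nat

lemma Wfun_tendsto (hα0 : 0 < α) (hα1 : α ≤ 1) :
    Tendsto (Wfun α) atTop (nhds (1 - binEnt ((1-α)/2))) := by
  rw [← const_ident hα0 hα1]
  have h1 : Tendsto (fun d : ℕ => Real.logb 2 (1+1/(d:ℝ))) atTop (nhds 0) :=
    logb_tendsto_zero (by simpa using (tendsto_const_nhds (x := (1:ℝ))).add inv_nat_tendsto)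
  have h2 : Tendsto (fun d : ℕ => Real.logb 2 (1-1/(d:ℝ))) atTop (nhds 0) :=
    logb_tendsto_zero (by simpa using (tendsto_const_nhds (x := (1:ℝ))).sub inv_nat_tendsto)
  have := (((tendsto_const_nhds (x := Real.logb 2 (1+α))).sub h1).const_mul ((1+α)/2)).add
    (((tendsto_const_nhds (x := Real.logb 2 (1-α))).sub h2).const_mul ((1-α)/2))
  simp only [sub_zero] at this
  exact this

lemma Gfun_tendsto (hα0 : 0 < α) (hα1 : α ≤ 1) :
    Tendsto (Gfun α) atTop (nhds 0) := by
  have hlogdiv : Tendsto (fun d : ℕ => Real.logb 2 (d:ℝ) / (d:ℝ)) atTop (nhds 0) := by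
    have h := Real.isLittleO_log_id_atTop.tendsto_div_nhds_zero
    have h2 := h.comp (tendsto_natCast_atTop_atTop (R := ℝ))
    have h3 := h2.div_const (Real.log 2)
    rw [zero_div] at h3
    apply h3.congr
    intro d
    simp [Real.logb, Function.comp]
    ring
  have hαd : Tendsto (fun d : ℕ => α/(d:ℝ)) atTop (nhds 0) := by
    have := inv_nat_tendsto.const_mul α
    rw [mul_zero] at this
    apply this.congr
    intro d
    ring
  have t1 : Tendsto (fun d : ℕ => (α/(d:ℝ))*Real.logb 2 (d:ℝ)) atTop (nhds 0) := by
    have := hlogdiv.const_mul α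
    rw [mul_zero] at this
    apply this.congr
    intro d
    field_simp
  have t2 : Tendsto (fun d : ℕ => (α/(d:ℝ))*Real.logb 2 α) atTop (nhds 0) := by
    have := hαd.mul_const (Real.logb 2 α)
    rwa [zero_mul] at this
  have h1mαd : Tendsto (fun d : ℕ => 1-α/(d:ℝ)) atTop (nhds 1) := by
    have := (tendsto_const_nhds (x := (1:ℝ))).sub hαd
    rwa [sub_zero] at this
  have hdsq : Tendsto (fun d : ℕ => 1-1/(d:ℝ)^2) atTop (nhds 1) := by
    have h := inv_nat_tendsto.mul inv_nat_tendsto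
    rw [mul_zero] at h
    have := (tendsto_const_nhds (x := (1:ℝ))).sub h
    rw [sub_zero] at this
    apply this.congr
    intro d
    congr 1
    ring
  have t3 : Tendsto (fun d : ℕ => (1-α/(d:ℝ))*(Real.logb 2 (1-α/(d:ℝ)) - Real.logb 2 (1-1/(d:ℝ)^2)))
      atTop (nhds 0) := by
    have := h1mαd.mul ((logb_tendsto_zero h1mαd).sub (logb_tendsto_zero hdsq))
    simpa using this
  have := (t1.add t2).add t3
  simp only [add_zero] at this
  exact this


lemma cast_m_half (d : ℕ) : ((d*(d+1)/2 : ℕ) : ℝ) = (d:ℝ)*((d:ℝ)+1)/2 := by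
  rw [Nat.cast_div (even_iff_two_dvd.mp (Nat.even_mul_succ_self d)) (by norm_num)]
  push_cast
  ring

lemma nlog2_inv (x : ℝ) : nlog2 x⁻¹ = x⁻¹ * Real.logb 2 x := by
  rw [nlog2, Real.logb_inv]
  ring

lemma vN_margin (hd : 2 ≤ d) : vN ((((d:ℝ)⁻¹ : ℝ) : ℂ) • (1 : Matrix (Fin d) (Fin d) ℂ))
    = Real.logb 2 (d:ℝ) := by
  have hxne : (d:ℝ) ≠ 0 := by positivity
  rw [vN_scalar, Fintype.card_fin, nlog2_inv, ← mul_assoc, mul_inv_cancel₀ hxne, one_mul]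

lemma mutInfo_wernerA_eq (hα0 : 0 < α) (hα1 : α ≤ 1) (hd : 2 ≤ d)
    (hαd : α * (d:ℝ) ≠ 1) : mutInfo (wernerA d α) = Wfun α d := by
  have hx2 : (2:ℝ) ≤ (d:ℝ) := by exact_mod_cast hd
  have hx0 : (0:ℝ) < (d:ℝ) := by linarith
  have hxne : (d:ℝ) ≠ 0 := hx0.ne'
  have hppos : (0:ℝ) < (d:ℝ)^2+(d:ℝ) := by positivity
  have hp : ((d:ℝ)^2+(d:ℝ)) ≠ 0 := hppos.ne'
  have hmpos : (0:ℝ) < (d:ℝ)^2-(d:ℝ) := by nlinarith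
  have hm : ((d:ℝ)^2-(d:ℝ)) ≠ 0 := hmpos.ne'
  set aS : ℝ := (1+α)/((d:ℝ)^2+(d:ℝ)) with haS
  set bA : ℝ := (1-α)/((d:ℝ)^2-(d:ℝ)) with hbA
  have hW : wernerA d α = (((aS + bA)/2 : ℝ) : ℂ) • 1 + (((aS - bA)/2 : ℝ) : ℂ) • swapM d :=
    wernerA_eq hd α
  set c1 : ℝ := (aS + bA)/2 with hc1
  set c2 : ℝ := (aS - bA)/2 with hc2
  -- marginals
  have hmarg : c1*(d:ℝ) + c2 = (d:ℝ)⁻¹ := by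
    rw [hc1, hc2, haS, hbA]
    have hd1 : (d:ℝ) - 1 ≠ 0 := (by linarith : (0:ℝ) < (d:ℝ) - 1).ne'
    field_simp
    ring
  have htrB : trB (wernerA d α) = (((d:ℝ)⁻¹ : ℝ) : ℂ) • 1 := by
    rw [hW, trB_comb_swap, hmarg]
  have htrA : trA (wernerA d α) = (((d:ℝ)⁻¹ : ℝ) : ℂ) • 1 := by
    rw [hW, trA_comb_swap, hmarg]
  -- distinct eigenvalues
  have hab : aS ≠ bA := by
    intro h
    rw [haS, hbA, div_eq_div_iff hp hm] at h
    have h2 : α*(d:ℝ)*(d:ℝ) = (d:ℝ) := by nlinarith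
    apply hαd
    have := mul_right_cancel₀ hxne (h2.trans (one_mul (d:ℝ)).symm)
    exact this
  -- hermitian
  have hA : (wernerA d α).IsHermitian := by
    rw [hW]; exact herm_comb c1 c2 (swapM_herm d)
  -- quadratic relation
  have hq : (wernerA d α - ((aS : ℝ) : ℂ) • 1) * (wernerA d α - ((bA : ℝ) : ℂ) • 1) = 0 := by
    have e1 : ((aS : ℝ) : ℂ) = (c1 : ℂ) + (c2 : ℂ) := by
      rw [hc1, hc2]; push_cast; ring
    have e2 : ((bA : ℝ) : ℂ) = (c1 : ℂ) - (c2 : ℂ) := by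
      rw [hc1, hc2]; push_cast; ring
    rw [hW, e1, e2]
    exact quad_invol (swapM_mul_self d) (c1 : ℂ) (c2 : ℂ)
  -- trace relation
  have hcard : (Fintype.card (Fin d × Fin d) : ℝ) = (d:ℝ)*(d:ℝ) := by
    simp [Fintype.card_prod]
  have htr : (wernerA d α).trace
      = ((((d*(d+1)/2 : ℕ) : ℝ) * aS + ((Fintype.card (Fin d × Fin d) : ℝ)
          - ((d*(d+1)/2 : ℕ) : ℝ)) * bA : ℝ) : ℂ) := by
    rw [hW, trace_comb_swap]
    congr 1
    rw [cast_m_half, hcard, hc1, hc2]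
    ring
  have hvN := vN_two_valued hA hab hq (d*(d+1)/2) htr
  -- assemble
  rw [mutInfo, htrB, htrA, vN_margin hd, hvN, cast_m_half, hcard]
  have e3 : ((d:ℝ)*(d:ℝ) - (d:ℝ)*((d:ℝ)+1)/2) = (d:ℝ)*((d:ℝ)-1)/2 := by ring
  rw [e3, haS, hbA, R1 hα0 hα1 hx2, R2 hα0 hα1 hx2, Wfun]
  ring

lemma mutInfo_ptB_eq (hα0 : 0 < α) (hα1 : α ≤ 1) (hd : 2 ≤ d)
    (hαd : α * (d:ℝ) ≠ 1) : mutInfo (ptB (wernerA d α)) = Gfun α d := by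
  have hd0 : 0 < d := by omega
  have hx2 : (2:ℝ) ≤ (d:ℝ) := by exact_mod_cast hd
  have hx0 : (0:ℝ) < (d:ℝ) := by linarith
  have hxne : (d:ℝ) ≠ 0 := hx0.ne'
  have hppos : (0:ℝ) < (d:ℝ)^2+(d:ℝ) := by positivity
  have hp : ((d:ℝ)^2+(d:ℝ)) ≠ 0 := hppos.ne'
  have hmpos : (0:ℝ) < (d:ℝ)^2-(d:ℝ) := by nlinarith
  have hm : ((d:ℝ)^2-(d:ℝ)) ≠ 0 := hmpos.ne'
  have hq1pos : (0:ℝ) < (d:ℝ)^2-1 := by nlinarith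
  have hq1 : ((d:ℝ)^2-1) ≠ 0 := hq1pos.ne'
  set aS : ℝ := (1+α)/((d:ℝ)^2+(d:ℝ)) with haS
  set bA : ℝ := (1-α)/((d:ℝ)^2-(d:ℝ)) with hbA
  have hW : wernerA d α = (((aS + bA)/2 : ℝ) : ℂ) • 1 + (((aS - bA)/2 : ℝ) : ℂ) • swapM d :=
    wernerA_eq hd α
  set c1 : ℝ := (aS + bA)/2 with hc1
  set c2 : ℝ := (aS - bA)/2 with hc2
  have hP : ptB (wernerA d α) = ((c1 : ℝ) : ℂ) • 1 + ((c2*(d:ℝ) : ℝ) : ℂ) • phiProj d := by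
    rw [hW]; exact ptB_comb hd0 c1 c2
  set a' : ℝ := α/(d:ℝ) with ha'
  set b' : ℝ := ((d:ℝ)-α)/((d:ℝ)*((d:ℝ)^2-1)) with hb'
  -- marginals
  have hmarg : c1*(d:ℝ) + (c2*(d:ℝ))*(d:ℝ)⁻¹ = (d:ℝ)⁻¹ := by
    rw [hc1, hc2, haS, hbA]
    have hd1 : (d:ℝ) - 1 ≠ 0 := (by linarith : (0:ℝ) < (d:ℝ) - 1).ne'
    field_simp
    ring
  have htrB : trB (ptB (wernerA d α)) = (((d:ℝ)⁻¹ : ℝ) : ℂ) • 1 := by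
    rw [hP, trB_comb_phi hd0, hmarg]
  have htrA : trA (ptB (wernerA d α)) = (((d:ℝ)⁻¹ : ℝ) : ℂ) • 1 := by
    rw [hP, trA_comb_phi hd0, hmarg]
  -- distinct eigenvalues
  have hab : a' ≠ b' := by
    intro h
    rw [ha', hb', div_eq_div_iff hxne (by positivity)] at h
    have h2 : α*(d:ℝ)*(d:ℝ) = (d:ℝ) := by nlinarith
    exact hαd (mul_right_cancel₀ hxne (h2.trans (one_mul (d:ℝ)).symm))
  -- hermitian
  have hA : (ptB (wernerA d α)).IsHermitian := by
    rw [hP]; exact herm_comb c1 (c2*(d:ℝ)) (phiProj_herm d)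
  -- quadratic relation
  have hq : (ptB (wernerA d α) - ((a' : ℝ) : ℂ) • 1) * (ptB (wernerA d α) - ((b' : ℝ) : ℂ) • 1)
      = 0 := by
    have e1 : ((a' : ℝ) : ℂ) = (c1 : ℂ) + ((c2*(d:ℝ) : ℝ) : ℂ) := by
      have : a' = c1 + c2*(d:ℝ) := by
        rw [ha', hc1, hc2, haS, hbA]
        have hd1 : (d:ℝ) - 1 ≠ 0 := (by linarith : (0:ℝ) < (d:ℝ) - 1).ne'
        field_simp
        ring
      rw [this]; push_cast; ring
    have e2 : ((b' : ℝ) : ℂ) = ((c1 : ℝ) : ℂ) := by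
      have : b' = c1 := by
        rw [hb', hc1, haS, hbA]
        have hd1 : (d:ℝ) - 1 ≠ 0 := (by linarith : (0:ℝ) < (d:ℝ) - 1).ne'
        field_simp
        ring
      rw [this]
    rw [hP, e1, e2]
    exact quad_proj (phiProj_mul_self d hd0) (c1 : ℂ) ((c2*(d:ℝ) : ℝ) : ℂ)
  -- trace relation
  have hcard : (Fintype.card (Fin d × Fin d) : ℝ) = (d:ℝ)*(d:ℝ) := by
    simp [Fintype.card_prod]
  have htr : (ptB (wernerA d α)).trace
      = ((((1 : ℕ) : ℝ) * a' + ((Fintype.card (Fin d × Fin d) : ℝ) - ((1 : ℕ) : ℝ)) * b' : ℝ) : ℂ) := by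
    rw [hP, trace_comb_phi hd0]
    congr 1
    rw [hcard, ha', hb', hc1, hc2, haS, hbA]
    push_cast
    have hd1 : (d:ℝ) - 1 ≠ 0 := (by linarith : (0:ℝ) < (d:ℝ) - 1).ne'
    field_simp
    ring
  have hvN := vN_two_valued hA hab hq 1 htr
  -- assemble
  rw [mutInfo, htrB, htrA, vN_margin hd, hvN, hcard]
  have e3 : ((d:ℝ)*(d:ℝ) - ((1:ℕ):ℝ)) = (d:ℝ)^2 - 1 := by push_cast; ring
  rw [e3, ha', hb', R4 hα0 hα1 hx2, Nat.cast_one, one_mul, R3 hα0 hx2, Gfun]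
  ring

end Aux

theorem werner_gap_exists (α : ℝ) (hα : α ∈ Set.Ioc (0 : ℝ) 1) :
    (∃ d : ℕ, 2 ≤ d ∧ 2 * mutInfo (ptB (wernerA d α)) < mutInfo (wernerA d α)) ∧
    Filter.Tendsto (fun d : ℕ => mutInfo (wernerA d α)) Filter.atTop
      (nhds (1 - binEnt ((1 - α)/2))) ∧
    0 < 1 - binEnt ((1 - α)/2) ∧
    Filter.Tendsto (fun d : ℕ => mutInfo (ptB (wernerA d α))) Filter.atTop (nhds 0) := by
  obtain ⟨hα0, hα1⟩ := hα
  have hgood : ∀ᶠ d : ℕ in atTop, 2 ≤ d ∧ α * (d:ℝ) ≠ 1 := by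
    rw [eventually_atTop]
    refine ⟨max 2 (⌈α⁻¹⌉₊ + 1), fun d hdge => ?_⟩
    constructor
    · exact le_trans (le_max_left _ _) hdge
    · have h1 : (⌈α⁻¹⌉₊ + 1 : ℕ) ≤ d := le_trans (le_max_right _ _) hdge
      have h2 : (α⁻¹ : ℝ) < d := by
        calc (α⁻¹ : ℝ) ≤ (⌈α⁻¹⌉₊ : ℝ) := Nat.le_ceil _
        _ < (⌈α⁻¹⌉₊ : ℝ) + 1 := by linarith
        _ ≤ d := by exact_mod_cast h1
      have h3 : α * α⁻¹ < α * d := mul_lt_mul_of_pos_left h2 hα0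
      rw [mul_inv_cancel₀ hα0.ne'] at h3
      exact h3.ne'
  have hWev : (fun d : ℕ => mutInfo (wernerA d α)) =ᶠ[atTop] Wfun α :=
    hgood.mono fun d hd => mutInfo_wernerA_eq hα0 hα1 hd.1 hd.2
  have hGev : (fun d : ℕ => mutInfo (ptB (wernerA d α))) =ᶠ[atTop] Gfun α :=
    hgood.mono fun d hd => mutInfo_ptB_eq hα0 hα1 hd.1 hd.2
  have tendW : Filter.Tendsto (fun d : ℕ => mutInfo (wernerA d α)) Filter.atTop
      (nhds (1 - binEnt ((1 - α)/2))) :=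
    (Wfun_tendsto hα0 hα1).congr' hWev.symm
  have tendG : Filter.Tendsto (fun d : ℕ => mutInfo (ptB (wernerA d α))) Filter.atTop
      (nhds 0) :=
    (Gfun_tendsto hα0 hα1).congr' hGev.symm
  have hpos : 0 < 1 - binEnt ((1 - α)/2) := by
    have := binEnt_lt_one hα0 hα1
    linarith
  refine ⟨?_, tendW, hpos, tendG⟩
  have hφ : Filter.Tendsto (fun d : ℕ => mutInfo (wernerA d α)
      - 2 * mutInfo (ptB (wernerA d α))) Filter.atTop (nhds (1 - binEnt ((1 - α)/2))) := by
    have := tendW.sub (tendG.const_mul 2)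
    rwa [mul_zero, sub_zero] at this
  have hev2 : ∀ᶠ d : ℕ in atTop, 0 < mutInfo (wernerA d α)
      - 2 * mutInfo (ptB (wernerA d α)) := hφ.eventually (lt_mem_nhds hpos)
  obtain ⟨d, hd1, hd2⟩ := (hev2.and (eventually_ge_atTop 2)).exists
  exact ⟨d, hd2, by linarith⟩


end
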